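/- (Littlewood's 4/3 inequality) For every positive integer N and every bilinear form U : ℓ_∞^N × ℓ_∞^N → 𝕂 (where 𝕂 is ℝ or ℂ), one has (Σ_{i,j=1}^N |U(e_i, e_j)|^{4/3})^{3/4} ≤ √2 · ‖U‖. -/

import Mathlib

open scoped BigOperators

open scoped BigOperators
namespace Littlewood43
noncomputable section
variable {N : ℕ}

def sg (b : Bool) : ℝ := cond b 1 (-1)
@[simp] lemma sg_not (b : Bool) : sg (!b) = - sg b := by cases b <;> simp [sg]
@[simp] lemma sg_sq (b : Bool) : sg b ^ 2 = 1 := by cases b <;> simp [sg]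
@[simp] lemma abs_sg (b : Bool) : |sg b| = 1 := by cases b <;> simp [sg]

def flip (i : Fin N) (ε : Fin N → Bool) : Fin N → Bool := Function.update ε i (!ε i)

@[simp] lemma flip_apply_same (i : Fin N) (ε : Fin N → Bool) : flip i ε i = !ε i := by simp [flip]
lemma flip_apply_ne (i : Fin N) {j : Fin N} (h : j ≠ i) (ε : Fin N → Bool) :
    flip i ε j = ε j := by simp [flip, Function.update_of_ne h]
@[simp] lemma flip_flip (i : Fin N) (ε : Fin N → Bool) : flip i (flip i ε) = ε := by
  funext j
  rcases eq_or_ne j i with rfl | hj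
  · simp
  · simp [flip_apply_ne _ hj]
lemma flip_involutive (i : Fin N) : Function.Involutive (flip i) := fun ε => flip_flip i ε
lemma flip_apply (i j : Fin N) (ε : Fin N → Bool) :
    flip i ε j = if j = i then !ε i else ε j := by simp [flip, Function.update_apply]
lemma flip_comm {i j : Fin N} (h : i ≠ j) (ε : Fin N → Bool) :
    flip i (flip j ε) = flip j (flip i ε) := by
  funext k
  simp only [flip_apply]
  split_ifs with h1 h2 h2 <;> simp_all [flip_apply]

lemma sum_flip (i : Fin N) (F : (Fin N → Bool) → ℝ) :
    ∑ ε : Fin N → Bool, F (flip i ε) = ∑ ε : Fin N → Bool, F ε :=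
  Fintype.sum_bijective (flip i) (flip_involutive i).bijective _ _ (fun _ => rfl)

lemma sum_eq_zero_of_anti (i : Fin N) (F : (Fin N → Bool) → ℝ)
    (h : ∀ ε, F (flip i ε) = - F ε) :
    ∑ ε : Fin N → Bool, F ε = 0 := by
  have h1 : ∑ ε : Fin N → Bool, F ε = - ∑ ε : Fin N → Bool, F ε := by
    conv_lhs => rw [← sum_flip i F]
    rw [← Finset.sum_neg_distrib]
    exact Finset.sum_congr rfl fun ε _ => h ε
  linarith

def flipAll (s : Finset (Fin N)) (ε : Fin N → Bool) : Fin N → Bool :=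
  fun j => if j ∈ s then !ε j else ε j

@[simp] lemma flipAll_empty (ε : Fin N → Bool) : flipAll (∅ : Finset (Fin N)) ε = ε := by
  funext j; simp [flipAll]
lemma flipAll_insert {i : Fin N} {s : Finset (Fin N)} (hi : i ∉ s) (ε : Fin N → Bool) :
    flipAll (insert i s) ε = flip i (flipAll s ε) := by
  funext j
  rcases eq_or_ne j i with rfl | hj
  · simp [flipAll, hi]
  · rw [flip_apply_ne i hj]; simp [flipAll, hj]
lemma flipAll_apply_not_mem {s : Finset (Fin N)} {i : Fin N} (hi : i ∉ s) (ε : Fin N → Bool) :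
    flipAll s ε i = ε i := by simp [flipAll, hi]
lemma flip_flipAll_comm (i : Fin N) (s : Finset (Fin N)) (ε : Fin N → Bool) :
    flip i (flipAll s ε) = flipAll s (flip i ε) := by
  funext j
  simp only [flip_apply, flipAll]
  split_ifs with h1 h2 h2 <;> simp_all [flip_apply]

def DependsOn (s : Finset (Fin N)) (f : (Fin N → Bool) → ℝ) : Prop :=
  ∀ ε₁ ε₂, (∀ j ∈ s, ε₁ j = ε₂ j) → f ε₁ = f ε₂

def D (i : Fin N) (f : (Fin N → Bool) → ℝ) (ε : Fin N → Bool) : ℝ :=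
  (f ε - f (flip i ε)) / 2

lemma D_flip (i : Fin N) (f : (Fin N → Bool) → ℝ) (ε : Fin N → Bool) :
    D i f (flip i ε) = - D i f ε := by simp [D]; ring

/-- agreement on `s` is preserved by flips. -/
lemma flip_agree {s : Finset (Fin N)} {ε₁ ε₂ : Fin N → Bool} (i : Fin N)
    (h : ∀ j ∈ s, ε₁ j = ε₂ j) : ∀ j ∈ s, flip i ε₁ j = flip i ε₂ j := by
  intro j hj
  rcases eq_or_ne j i with rfl | hji
  · rw [flip_apply_same, flip_apply_same, h j hj]
  · rw [flip_apply_ne i hji, flip_apply_ne i hji, h j hj]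

lemma dependsOn_of_flip_inv {i : Fin N} {t : Finset (Fin N)} (hi : i ∉ t)
    {p : (Fin N → Bool) → ℝ} (hdep : DependsOn (insert i t) p)
    (hinv : ∀ ε, p (flip i ε) = p ε) : DependsOn t p := by
  intro ε₁ ε₂ hag
  by_cases hb : ε₁ i = ε₂ i
  · refine hdep ε₁ ε₂ ?_
    intro j hj
    rcases Finset.mem_insert.1 hj with rfl | hj
    · exact hb
    · exact hag j hj
  · have h1 : p (flip i ε₁) = p ε₂ := by
      refine hdep _ _ ?_
      intro j hj
      rcases Finset.mem_insert.1 hj with rfl | hj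
      · rw [flip_apply_same]
        cases hε1 : ε₁ j <;> cases hε2 : ε₂ j <;> simp_all
      · rw [flip_apply_ne i (fun hji => hi (hji ▸ hj)) ε₁]
        exact hag j hj
    rw [← hinv ε₁, h1]

/-- Orthogonality: invariant times anti-invariant sums to zero. -/
lemma sum_mul_eq_zero (i : Fin N) (F G : (Fin N → Bool) → ℝ)
    (hF : ∀ ε, F (flip i ε) = F ε) (hG : ∀ ε, G (flip i ε) = - G ε) :
    ∑ ε : Fin N → Bool, F ε * G ε = 0 := by
  refine sum_eq_zero_of_anti i _ (fun ε => ?_)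
  rw [hF, hG]; ring

lemma sum_sq_split (p q : (Fin N → Bool) → ℝ)
    (horth : ∑ ε : Fin N → Bool, p ε * q ε = 0) :
    ∑ ε : Fin N → Bool, (p ε + q ε) ^ 2
      = ∑ ε : Fin N → Bool, (p ε) ^ 2 + ∑ ε : Fin N → Bool, (q ε) ^ 2 := by
  have : ∀ ε : Fin N → Bool, (p ε + q ε) ^ 2 = p ε ^ 2 + 2 * (p ε * q ε) + q ε ^ 2 := by
    intro ε; ring
  rw [Finset.sum_congr rfl (fun ε _ => this ε)]
  rw [Finset.sum_add_distrib, Finset.sum_add_distrib, ← Finset.mul_sum, horth]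
  ring

/-- **Level-≥1 Poincaré inequality** for odd functions on the cube. -/
theorem odd_sq_le (t : Finset (Fin N)) :
    ∀ h : (Fin N → Bool) → ℝ, DependsOn t h → (∀ ε, h (flipAll t ε) = - h ε) →
      ∑ ε : Fin N → Bool, (h ε) ^ 2 ≤ ∑ j ∈ t, ∑ ε : Fin N → Bool, (D j h ε) ^ 2 := by
  induction t using Finset.induction_on with
  | empty =>
      intro h _ hodd
      have hz : ∀ ε, h ε = 0 := by
        intro ε
        have := hodd ε
        rw [flipAll_empty] at this
        linarith
      simp [hz]
  | @insert j u hj IH =>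
      intro h hdep hodd
      have hodd' : ∀ ε, h (flip j (flipAll u ε)) = - h ε := by
        intro ε
        rw [← flipAll_insert hj]; exact hodd ε
      set g' : (Fin N → Bool) → ℝ := fun ε => (h ε + h (flip j ε)) / 2 with hg'
      set h'' : (Fin N → Bool) → ℝ := D j h with hh''
      have f1 : ∀ ε, g' ε + h'' ε = h ε := by intro ε; simp [hg', hh'', D]; ring
      have f2 : ∀ ε, g' (flip j ε) = g' ε := by intro ε; simp [hg', flip_flip]; ring
      have f3 : ∀ ε, h'' (flip j ε) = - h'' ε := fun ε => D_flip j h ε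
      have hdepg : DependsOn u g' := by
        refine dependsOn_of_flip_inv hj ?_ f2
        intro ε₁ ε₂ hag
        simp only [hg']
        rw [hdep ε₁ ε₂ hag, hdep (flip j ε₁) (flip j ε₂) (flip_agree j hag)]
      have hoddg : ∀ ε, g' (flipAll u ε) = - g' ε := by
        intro ε
        have e1 : h (flipAll u ε) = - h (flip j ε) := by
          have := hodd' (flip j ε)
          rwa [flip_flipAll_comm, flip_flip] at this
        have e2 : h (flip j (flipAll u ε)) = - h ε := hodd' ε
        simp only [hg', e1, e2]; ring
      have f6 : ∑ ε : Fin N → Bool, g' ε * h'' ε = 0 := sum_mul_eq_zero j _ _ f2 f3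
      have f7 : ∑ ε : Fin N → Bool, (h ε) ^ 2
          = ∑ ε : Fin N → Bool, (g' ε) ^ 2 + ∑ ε : Fin N → Bool, (h'' ε) ^ 2 := by
        rw [← sum_sq_split g' h'' f6]
        exact Finset.sum_congr rfl fun ε _ => by rw [f1]
      have f8 : ∀ k ∈ u, ∑ ε : Fin N → Bool, (D k g' ε) ^ 2 ≤
          ∑ ε : Fin N → Bool, (D k h ε) ^ 2 := by
        intro k hk
        have hkj : k ≠ j := fun hkj => hj (hkj ▸ hk)
        have hsplit : ∀ ε, D k h ε = D k g' ε + D k h'' ε := by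
          intro ε; simp only [D, ← f1]; ring
        have horth : ∑ ε : Fin N → Bool, D k g' ε * D k h'' ε = 0 := by
          refine sum_mul_eq_zero j _ _ (fun ε => ?_) (fun ε => ?_)
          · simp only [D, f2, flip_comm hkj, f2]
          · simp only [D, f3, flip_comm hkj, f3]; ring
        have : ∑ ε : Fin N → Bool, (D k h ε) ^ 2
            = ∑ ε : Fin N → Bool, (D k g' ε) ^ 2 + ∑ ε : Fin N → Bool, (D k h'' ε) ^ 2 := by
          rw [← sum_sq_split _ _ horth]
          exact Finset.sum_congr rfl fun ε _ => by rw [hsplit]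
        rw [this]
        have : (0:ℝ) ≤ ∑ ε : Fin N → Bool, (D k h'' ε) ^ 2 :=
          Finset.sum_nonneg fun ε _ => sq_nonneg _
        linarith
      have f9 := IH g' hdepg hoddg
      rw [Finset.sum_insert hj, f7]
      have hDj : ∑ ε : Fin N → Bool, (D j h ε) ^ 2 = ∑ ε : Fin N → Bool, (h'' ε) ^ 2 := rfl
      rw [hDj]
      have : ∑ k ∈ u, ∑ ε : Fin N → Bool, (D k g' ε) ^ 2
          ≤ ∑ k ∈ u, ∑ ε : Fin N → Bool, (D k h ε) ^ 2 :=
        Finset.sum_le_sum f8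
      linarith


/-- **Level-≥2 Poincaré inequality** for even functions on the cube:
`2^N * Σ f² ≤ (Σ f)² + (2^N)/2 * Σ_j Σ (D_j f)²`. -/
theorem even_var_le (s : Finset (Fin N)) :
    ∀ f : (Fin N → Bool) → ℝ, DependsOn s f → (∀ ε, f (flipAll s ε) = f ε) →
      (2:ℝ) ^ N * ∑ ε : Fin N → Bool, (f ε) ^ 2 ≤
        (∑ ε : Fin N → Bool, f ε) ^ 2
          + (2:ℝ) ^ N / 2 * ∑ j ∈ s, ∑ ε : Fin N → Bool, (D j f ε) ^ 2 := by
  induction s using Finset.induction_on with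
  | empty =>
      intro f hdep _
      have hconst : ∀ ε, f ε = f (fun _ => false) := by
        intro ε
        exact hdep ε (fun _ => false) (by simp)
      have hcard : (Finset.univ : Finset (Fin N → Bool)).card = 2 ^ N := by
        simp [Fintype.card_fun]
      rw [Finset.sum_congr rfl (fun ε _ => hconst ε),
          Finset.sum_congr rfl (fun ε _ => by rw [hconst ε])]
      rw [Finset.sum_const, Finset.sum_const, hcard]
      simp only [Finset.sum_empty, mul_zero, add_zero, nsmul_eq_mul]
      push_cast
      exact le_of_eq (by ring)
  | @insert i t hi IH =>
      intro f hdep heven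
      have heven' : ∀ ε, f (flip i (flipAll t ε)) = f ε := by
        intro ε; rw [← flipAll_insert hi]; exact heven ε
      set g : (Fin N → Bool) → ℝ := fun ε => (f ε + f (flip i ε)) / 2 with hgdef
      set h : (Fin N → Bool) → ℝ := D i f with hhdef
      have f1 : ∀ ε, g ε + h ε = f ε := by intro ε; simp [hgdef, hhdef, D]; ring
      have f2 : ∀ ε, g (flip i ε) = g ε := by intro ε; simp [hgdef, flip_flip]; ring
      have f3 : ∀ ε, h (flip i ε) = - h ε := fun ε => D_flip i f ε
      -- f on flipAll t equals f on flip i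
      have e0 : ∀ ε, f (flipAll t ε) = f (flip i ε) := by
        intro ε
        have h1 := heven' (flip i ε)
        rwa [flip_flipAll_comm, flip_flip] at h1
      have hdepg : DependsOn t g := by
        refine dependsOn_of_flip_inv hi ?_ f2
        intro ε₁ ε₂ hag
        simp only [hgdef]
        rw [hdep ε₁ ε₂ hag, hdep (flip i ε₁) (flip i ε₂) (flip_agree i hag)]
      have heveng : ∀ ε, g (flipAll t ε) = g ε := by
        intro ε
        have e2 : f (flip i (flipAll t ε)) = f ε := heven' ε
        simp only [hgdef, e0 ε, e2]
        ring
      -- the odd part, twisted by the sign of coordinate i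
      set ht : (Fin N → Bool) → ℝ := fun ε => sg (ε i) * h ε with htdef
      have hadd : ∀ ε, h (flipAll t ε) = - h ε := by
        intro ε
        have : h (flipAll t ε) = (f (flipAll t ε) - f (flip i (flipAll t ε))) / 2 := rfl
        rw [this, e0 ε, heven' ε]
        simp only [hhdef, D]
        ring
      have htflip : ∀ ε, ht (flip i ε) = ht ε := by
        intro ε
        simp only [htdef, flip_apply_same, sg_not, f3]
        ring
      have hdepht : DependsOn t ht := by
        refine dependsOn_of_flip_inv hi ?_ htflip
        intro ε₁ ε₂ hag
        have hi' : ε₁ i = ε₂ i := hag i (Finset.mem_insert_self i t)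
        have hh' : h ε₁ = h ε₂ := by
          simp only [hhdef, D]
          rw [hdep ε₁ ε₂ hag, hdep (flip i ε₁) (flip i ε₂) (flip_agree i hag)]
        simp only [htdef, hi', hh']
      have hoddht : ∀ ε, ht (flipAll t ε) = - ht ε := by
        intro ε
        simp only [htdef, flipAll_apply_not_mem hi, hadd ε]
        ring
      have hodd_le : ∑ ε : Fin N → Bool, (h ε) ^ 2 ≤
          ∑ j ∈ t, ∑ ε : Fin N → Bool, (D j h ε) ^ 2 := by
        have h1 := odd_sq_le t ht hdepht hoddht
        have h2 : ∑ ε : Fin N → Bool, (ht ε) ^ 2 = ∑ ε : Fin N → Bool, (h ε) ^ 2 := by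
          refine Finset.sum_congr rfl fun ε _ => ?_
          simp only [htdef, mul_pow, sg_sq, one_mul]
        have h3 : ∀ j ∈ t, ∑ ε : Fin N → Bool, (D j ht ε) ^ 2
            = ∑ ε : Fin N → Bool, (D j h ε) ^ 2 := by
          intro j hjt
          refine Finset.sum_congr rfl fun ε _ => ?_
          have hji : i ≠ j := fun hij => hi (hij ▸ hjt)
          have : D j ht ε = sg (ε i) * D j h ε := by
            simp only [htdef, D, flip_apply_ne j hji]
            ring
          rw [this, mul_pow, sg_sq, one_mul]
        rw [h2, Finset.sum_congr rfl h3] at h1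
        exact h1
      -- sum decompositions
      have hsumh : ∑ ε : Fin N → Bool, h ε = 0 := sum_eq_zero_of_anti i h f3
      have hsumf : ∑ ε : Fin N → Bool, f ε = ∑ ε : Fin N → Bool, g ε := by
        rw [← Finset.sum_congr rfl (fun ε (_ : ε ∈ Finset.univ) => f1 ε),
        Finset.sum_add_distrib, hsumh, add_zero]
      have hsumsq : ∑ ε : Fin N → Bool, (f ε) ^ 2
          = ∑ ε : Fin N → Bool, (g ε) ^ 2 + ∑ ε : Fin N → Bool, (h ε) ^ 2 := by
        rw [← sum_sq_split g h (sum_mul_eq_zero i g h f2 f3)]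
        exact Finset.sum_congr rfl fun ε _ => by rw [f1]
      have hDsum : ∀ j ∈ t, ∑ ε : Fin N → Bool, (D j f ε) ^ 2
          = ∑ ε : Fin N → Bool, (D j g ε) ^ 2 + ∑ ε : Fin N → Bool, (D j h ε) ^ 2 := by
        intro j hjt
        have hji : j ≠ i := fun hij => hi (hij ▸ hjt)
        have hsplit : ∀ ε, D j f ε = D j g ε + D j h ε := by
          intro ε; simp only [D, ← f1]; ring
        have horth : ∑ ε : Fin N → Bool, D j g ε * D j h ε = 0 := by
          refine sum_mul_eq_zero i _ _ (fun ε => ?_) (fun ε => ?_)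
          · simp only [D, f2, flip_comm hji, f2]
          · simp only [D, f3, flip_comm hji, f3]; ring
        rw [← sum_sq_split _ _ horth]
        exact Finset.sum_congr rfl fun ε _ => by rw [hsplit]
      have hDi : ∑ ε : Fin N → Bool, (D i f ε) ^ 2 = ∑ ε : Fin N → Bool, (h ε) ^ 2 := rfl
      have hIH := IH g hdepg heveng
      rw [Finset.sum_insert hi, hsumf, hsumsq, hDi,
        Finset.sum_congr rfl hDsum]
      rw [Finset.sum_add_distrib]
      have hc : (0:ℝ) ≤ (2:ℝ) ^ N / 2 := by positivity
      have hmul := mul_le_mul_of_nonneg_left hodd_le hc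
      have hc2 : (0:ℝ) ≤ (2:ℝ) ^ N := by positivity
      nlinarith [hIH, hmul]



section Khintchine

variable {𝕂 : Type*} [RCLike 𝕂]

/-- Random sign combination of the vectors `x i`, `i ∈ s`. -/
def Sg (x : Fin N → 𝕂) (s : Finset (Fin N)) (ε : Fin N → Bool) : 𝕂 :=
  ∑ i ∈ s, sg (ε i) • x i

lemma Sg_flip_not_mem (x : Fin N → 𝕂) {s : Finset (Fin N)} {i : Fin N} (hi : i ∉ s)
    (ε : Fin N → Bool) : Sg x s (flip i ε) = Sg x s ε := by
  refine Finset.sum_congr rfl fun j hj => ?_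
  rw [flip_apply_ne i (fun hji => hi (hji ▸ hj)) ε]

lemma Sg_insert (x : Fin N → 𝕂) {s : Finset (Fin N)} {i : Fin N} (hi : i ∉ s)
    (ε : Fin N → Bool) : Sg x (insert i s) ε = Sg x s ε + sg (ε i) • x i := by
  rw [Sg, Finset.sum_insert hi, add_comm]
  rfl

lemma norm_sq_smul_sg (b : Bool) (v : 𝕂) : ‖sg b • v‖ ^ 2 = ‖v‖ ^ 2 := by
  rw [norm_smul]
  simp [Real.norm_eq_abs]

/-- Second moment identity: `Σ_ε ‖S_ε‖² = 2^N Σ ‖x i‖²`. -/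
lemma sum_norm_sq_Sg (x : Fin N → 𝕂) (s : Finset (Fin N)) :
    ∑ ε : Fin N → Bool, ‖Sg x s ε‖ ^ 2 = (2:ℝ) ^ N * ∑ i ∈ s, ‖x i‖ ^ 2 := by
  induction s using Finset.induction_on with
  | empty => simp [Sg]
  | @insert i s hi IH =>
      have key : (2:ℝ) * ∑ ε : Fin N → Bool, ‖Sg x (insert i s) ε‖ ^ 2
          = 2 * ((2:ℝ) ^ N * ∑ j ∈ s, ‖x j‖ ^ 2 + (2:ℝ) ^ N * ‖x i‖ ^ 2) := by
        have h2 : ∑ ε : Fin N → Bool, ‖Sg x (insert i s) ε‖ ^ 2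
            = ∑ ε : Fin N → Bool, ‖Sg x (insert i s) (flip i ε)‖ ^ 2 :=
          (sum_flip i _).symm
        have h3 : ∀ ε : Fin N → Bool,
            ‖Sg x (insert i s) ε‖ ^ 2 + ‖Sg x (insert i s) (flip i ε)‖ ^ 2
              = 2 * (‖Sg x s ε‖ ^ 2 + ‖x i‖ ^ 2) := by
          intro ε
          rw [Sg_insert x hi ε, Sg_insert x hi (flip i ε), Sg_flip_not_mem x hi ε,
            flip_apply_same, sg_not, neg_smul, ← sub_eq_add_neg]
          have hpar := parallelogram_law_with_norm 𝕂 (Sg x s ε) (sg (ε i) • x i)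
          have : ‖sg (ε i) • x i‖ ^ 2 = ‖x i‖ ^ 2 := norm_sq_smul_sg _ _
          nlinarith [hpar]
        calc (2:ℝ) * ∑ ε : Fin N → Bool, ‖Sg x (insert i s) ε‖ ^ 2
            = ∑ ε : Fin N → Bool, (‖Sg x (insert i s) ε‖ ^ 2
                + ‖Sg x (insert i s) (flip i ε)‖ ^ 2) := by
              rw [Finset.sum_add_distrib, ← h2]; ring
          _ = ∑ ε : Fin N → Bool, 2 * (‖Sg x s ε‖ ^ 2 + ‖x i‖ ^ 2) :=
              Finset.sum_congr rfl fun ε _ => h3 ε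
          _ = 2 * ((2:ℝ) ^ N * ∑ j ∈ s, ‖x j‖ ^ 2 + (2:ℝ) ^ N * ‖x i‖ ^ 2) := by
              rw [← Finset.mul_sum, Finset.sum_add_distrib, Finset.sum_const, IH]
              simp [Fintype.card_fun, nsmul_eq_mul]
      rw [Finset.sum_insert hi]
      have expand : (2:ℝ) ^ N * (‖x i‖ ^ 2 + ∑ j ∈ s, ‖x j‖ ^ 2)
          = (2:ℝ) ^ N * ∑ j ∈ s, ‖x j‖ ^ 2 + (2:ℝ) ^ N * ‖x i‖ ^ 2 := by ring
      rw [expand]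
      linarith [key]

/-- **Khintchine inequality** with the sharp constant `√2`, via the even-function
Poincaré inequality on the discrete cube. -/
theorem khintchine (x : Fin N → 𝕂) :
    (2:ℝ) ^ N * Real.sqrt (∑ i, ‖x i‖ ^ 2) ≤
      Real.sqrt 2 * ∑ ε : Fin N → Bool, ‖Sg x Finset.univ ε‖ := by
  set f : (Fin N → Bool) → ℝ := fun ε => ‖Sg x Finset.univ ε‖ with hfdef
  have hdep : DependsOn Finset.univ f := by
    intro ε₁ ε₂ hag
    have : ε₁ = ε₂ := funext fun j => hag j (Finset.mem_univ j)
    rw [this]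
  have heven : ∀ ε, f (flipAll Finset.univ ε) = f ε := by
    intro ε
    have : Sg x Finset.univ (flipAll Finset.univ ε) = - Sg x Finset.univ ε := by
      rw [Sg, Sg, ← Finset.sum_neg_distrib]
      refine Finset.sum_congr rfl fun j _ => ?_
      have : flipAll Finset.univ ε j = !ε j := by simp [flipAll]
      rw [this, sg_not, neg_smul]
    simp only [hfdef, this, norm_neg]
  have hD : ∀ i, ∀ ε, (D i f ε) ^ 2 ≤ ‖x i‖ ^ 2 := by
    intro i ε
    have hdiff : Sg x Finset.univ ε - Sg x Finset.univ (flip i ε)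
        = (2 * sg (ε i)) • x i := by
      rw [Sg, Sg, ← Finset.sum_sub_distrib]
      rw [Finset.sum_eq_single_of_mem i (Finset.mem_univ i)
        (fun j _ hji => by rw [flip_apply_ne i hji]; simp)]
      rw [flip_apply_same, sg_not, ← sub_smul]
      ring_nf
    have h1 : |f ε - f (flip i ε)| ≤ ‖(2 * sg (ε i)) • x i‖ := by
      rw [← hdiff]
      exact abs_norm_sub_norm_le _ _
    have h2 : ‖(2 * sg (ε i)) • x i‖ = 2 * ‖x i‖ := by
      rw [norm_smul]
      simp [Real.norm_eq_abs, abs_mul]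
    have h3 : |D i f ε| ≤ ‖x i‖ := by
      rw [D, abs_div]
      rw [h2] at h1
      simp only [abs_two]
      linarith [abs_nonneg (f ε - f (flip i ε))]
    calc (D i f ε) ^ 2 = |D i f ε| ^ 2 := (sq_abs _).symm
      _ ≤ ‖x i‖ ^ 2 := by nlinarith [abs_nonneg (D i f ε), norm_nonneg (x i)]
  have hvar := even_var_le Finset.univ f hdep heven
  set c : ℝ := (2:ℝ) ^ N with hc
  have hc0 : (0:ℝ) < c := by positivity
  set σ2 : ℝ := ∑ i, ‖x i‖ ^ 2 with hσ2
  have hσ20 : 0 ≤ σ2 := Finset.sum_nonneg fun i _ => sq_nonneg _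
  have hm2 : ∑ ε : Fin N → Bool, (f ε) ^ 2 = c * σ2 := sum_norm_sq_Sg x Finset.univ
  have hDsum : ∑ j, ∑ ε : Fin N → Bool, (D j f ε) ^ 2 ≤ c * σ2 := by
    have : ∀ j : Fin N, ∑ ε : Fin N → Bool, (D j f ε) ^ 2 ≤ c * ‖x j‖ ^ 2 := by
      intro j
      calc ∑ ε : Fin N → Bool, (D j f ε) ^ 2 ≤ ∑ ε : Fin N → Bool, ‖x j‖ ^ 2 :=
            Finset.sum_le_sum fun ε _ => hD j ε
        _ = c * ‖x j‖ ^ 2 := by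
            rw [Finset.sum_const]
            simp [hc, Fintype.card_fun, nsmul_eq_mul]
      
    calc ∑ j, ∑ ε : Fin N → Bool, (D j f ε) ^ 2 ≤ ∑ j, c * ‖x j‖ ^ 2 :=
          Finset.sum_le_sum fun j _ => this j
      _ = c * σ2 := by rw [← Finset.mul_sum]
  set T : ℝ := ∑ ε : Fin N → Bool, f ε with hT
  have hT0 : 0 ≤ T := Finset.sum_nonneg fun ε _ => norm_nonneg _
  have hkey : c ^ 2 * σ2 ≤ 2 * T ^ 2 := by
    rw [hm2] at hvar
    nlinarith [hvar, hDsum, hc0.le]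
  have lhs_eq : c * Real.sqrt σ2 = Real.sqrt (c ^ 2 * σ2) := by
    rw [Real.sqrt_mul (by positivity), Real.sqrt_sq hc0.le]
  have rhs_eq : Real.sqrt 2 * T = Real.sqrt (2 * T ^ 2) := by
    rw [Real.sqrt_mul (by norm_num), Real.sqrt_sq hT0]
  rw [lhs_eq, rhs_eq]
  exact Real.sqrt_le_sqrt hkey

end Khintchine


section Bilinear

variable {𝕂 : Type*} [RCLike 𝕂]

/-- canonical basis vector of `ℓ_∞^N`. -/
def e (i : Fin N) : Fin N → 𝕂 := Pi.single i 1

lemma vec_eq_sum (v : Fin N → 𝕂) : v = ∑ i, v i • e (𝕂 := 𝕂) i := by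
  funext j
  rw [Finset.sum_apply]
  simp only [Pi.smul_apply, e, Pi.single_apply, smul_eq_mul, mul_ite, mul_one, mul_zero]
  rw [Finset.sum_ite_eq Finset.univ j v]
  simp

lemma clm_apply_eq_sum {W : Type*} [NormedAddCommGroup W] [NormedSpace 𝕂 W]
    (T : (Fin N → 𝕂) →L[𝕂] W) (v : Fin N → 𝕂) :
    T v = ∑ i, v i • T (e i) := by
  conv_lhs => rw [vec_eq_sum v]
  rw [map_sum]
  exact Finset.sum_congr rfl fun i _ => T.map_smul _ _

/-- the unimodular "conjugate sign" of `w`. -/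
def usign (w : 𝕂) : 𝕂 := ((‖w‖⁻¹ : ℝ) : 𝕂) * (starRingEnd 𝕂) w

lemma usign_mul (w : 𝕂) : usign w * w = ((‖w‖ : ℝ) : 𝕂) := by
  rw [usign, mul_assoc, RCLike.conj_mul]
  rw [← RCLike.ofReal_pow, ← RCLike.ofReal_mul]
  norm_cast
  rcases eq_or_ne (‖w‖) 0 with h0 | h0
  · rw [h0]; simp
  · field_simp

lemma norm_usign_le (w : 𝕂) : ‖usign w‖ ≤ 1 := by
  rw [usign, norm_mul, RCLike.norm_conj, RCLike.norm_ofReal]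
  rcases eq_or_ne (‖w‖) 0 with h0 | h0
  · rw [h0]; simp
  · rw [abs_of_nonneg (by positivity), inv_mul_cancel₀ h0]

lemma norm_pi_le_one {v : Fin N → 𝕂} (h : ∀ i, ‖v i‖ ≤ 1) : ‖v‖ ≤ 1 :=
  (pi_norm_le_iff_of_nonneg zero_le_one).2 h

variable (U : (Fin N → 𝕂) →L[𝕂] (Fin N → 𝕂) →L[𝕂] 𝕂)

/-- the sum of moduli along a "row" is bounded by the norm. -/
lemma row_sum_le (y : Fin N → 𝕂) (hy : ∀ j, ‖y j‖ ≤ 1) :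
    ∑ i, ‖U (e i) y‖ ≤ ‖U‖ := by
  set z : Fin N → 𝕂 := fun i => usign (U (e i) y) with hz
  have hzn : ∀ i, ‖z i‖ ≤ 1 := fun i => norm_usign_le _
  have hUz : U z y = ((∑ i, ‖U (e i) y‖ : ℝ) : 𝕂) := by
    have h1 : U z = ∑ i, z i • U (e i) := clm_apply_eq_sum U z
    rw [h1, ContinuousLinearMap.sum_apply]
    rw [RCLike.ofReal_sum]
    refine Finset.sum_congr rfl fun i _ => ?_
    rw [ContinuousLinearMap.smul_apply, smul_eq_mul, hz]
    exact usign_mul _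
  have h2 : (∑ i, ‖U (e i) y‖) = RCLike.re (U z y) := by rw [hUz, RCLike.ofReal_re]
  rw [h2]
  calc RCLike.re (U z y) ≤ ‖U z y‖ := RCLike.re_le_norm _
    _ ≤ ‖U‖ * ‖z‖ * ‖y‖ := U.le_opNorm₂ z y
    _ ≤ ‖U‖ * 1 * 1 := by
        have h3 : ‖z‖ ≤ 1 := norm_pi_le_one hzn
        have h4 : ‖y‖ ≤ 1 := norm_pi_le_one hy
        have h5 : (0:ℝ) ≤ ‖U‖ := ContinuousLinearMap.opNorm_nonneg U
        have h6 : (0:ℝ) ≤ ‖z‖ := norm_nonneg _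
        have h7 : (0:ℝ) ≤ ‖y‖ := norm_nonneg _
        nlinarith [mul_le_mul_of_nonneg_left h4 (mul_nonneg h5 h6),
          mul_le_mul_of_nonneg_left h3 h5]
    _ = ‖U‖ := by ring

/-- the sum of moduli along a "column" is bounded by the norm. -/
lemma col_sum_le (v : Fin N → 𝕂) (hv : ∀ i, ‖v i‖ ≤ 1) :
    ∑ j, ‖U v (e j)‖ ≤ ‖U‖ := by
  set z : Fin N → 𝕂 := fun j => usign (U v (e j)) with hz
  have hzn : ∀ j, ‖z j‖ ≤ 1 := fun j => norm_usign_le _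
  have hUz : U v z = ((∑ j, ‖U v (e j)‖ : ℝ) : 𝕂) := by
    rw [clm_apply_eq_sum (U v) z, RCLike.ofReal_sum]
    refine Finset.sum_congr rfl fun j _ => ?_
    rw [smul_eq_mul, hz]
    exact usign_mul _
  have h2 : (∑ j, ‖U v (e j)‖) = RCLike.re (U v z) := by rw [hUz, RCLike.ofReal_re]
  rw [h2]
  calc RCLike.re (U v z) ≤ ‖U v z‖ := RCLike.re_le_norm _
    _ ≤ ‖U‖ * ‖v‖ * ‖z‖ := U.le_opNorm₂ v z
    _ ≤ ‖U‖ * 1 * 1 := by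
        have h3 : ‖z‖ ≤ 1 := norm_pi_le_one hzn
        have h4 : ‖v‖ ≤ 1 := norm_pi_le_one hv
        have h5 : (0:ℝ) ≤ ‖U‖ := ContinuousLinearMap.opNorm_nonneg U
        have h6 : (0:ℝ) ≤ ‖z‖ := norm_nonneg _
        have h7 : (0:ℝ) ≤ ‖v‖ := norm_nonneg _
        nlinarith [mul_le_mul_of_nonneg_left h3 (mul_nonneg h5 h7),
          mul_le_mul_of_nonneg_left h4 h5]
    _ = ‖U‖ := by ring

/-- sign vector as an element of `ℓ_∞^N` over `𝕂`. -/
def wvec (ε : Fin N → Bool) : Fin N → 𝕂 := fun j => ((sg (ε j) : ℝ) : 𝕂)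

lemma wvec_norm (ε : Fin N → Bool) (j : Fin N) : ‖wvec (𝕂 := 𝕂) ε j‖ ≤ 1 := by
  rw [wvec, RCLike.norm_ofReal]
  simp

lemma Sg_row (i : Fin N) (ε : Fin N → Bool) :
    Sg (fun j => U (e i) (e j)) Finset.univ ε = U (e i) (wvec ε) := by
  rw [clm_apply_eq_sum (U (e i)) (wvec ε), Sg]
  refine Finset.sum_congr rfl fun j _ => ?_
  rw [wvec, RCLike.real_smul_eq_coe_mul, smul_eq_mul]

lemma Sg_col (j : Fin N) (ε : Fin N → Bool) :
    Sg (fun i => U (e i) (e j)) Finset.univ ε = U (wvec ε) (e j) := by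
  have h1 : U (wvec ε) = ∑ i, (wvec (𝕂 := 𝕂) ε i) • U (e i) := clm_apply_eq_sum U (wvec ε)
  rw [h1, ContinuousLinearMap.sum_apply, Sg]
  refine Finset.sum_congr rfl fun i _ => ?_
  rw [ContinuousLinearMap.smul_apply, wvec, RCLike.real_smul_eq_coe_mul, smul_eq_mul]

/-- Littlewood's `ℓ¹(ℓ²)` bound for the rows. -/
lemma A_bound : ∑ i, Real.sqrt (∑ j, ‖U (e i) (e j)‖ ^ 2) ≤ Real.sqrt 2 * ‖U‖ := by
  set c : ℝ := (2:ℝ) ^ N with hc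
  have hc0 : (0:ℝ) < c := by positivity
  have key : c * ∑ i, Real.sqrt (∑ j, ‖U (e i) (e j)‖ ^ 2) ≤ c * (Real.sqrt 2 * ‖U‖) := by
    calc c * ∑ i, Real.sqrt (∑ j, ‖U (e i) (e j)‖ ^ 2)
        = ∑ i, c * Real.sqrt (∑ j, ‖U (e i) (e j)‖ ^ 2) := Finset.mul_sum _ _ _
      _ ≤ ∑ i, Real.sqrt 2 * ∑ ε : Fin N → Bool, ‖Sg (fun j => U (e i) (e j)) Finset.univ ε‖ :=
          Finset.sum_le_sum fun i _ => khintchine (fun j => U (e i) (e j))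
      _ = Real.sqrt 2 * ∑ ε : Fin N → Bool, ∑ i, ‖U (e i) (wvec ε)‖ := by
          rw [← Finset.mul_sum]
          rw [Finset.sum_comm]
          congr 1
          refine Finset.sum_congr rfl fun ε _ => Finset.sum_congr rfl fun i _ => ?_
          rw [Sg_row]
      _ ≤ Real.sqrt 2 * ∑ ε : Fin N → Bool, ‖U‖ := by
          have h1 : ∀ ε : Fin N → Bool, ∑ i, ‖U (e i) (wvec ε)‖ ≤ ‖U‖ :=
            fun ε => row_sum_le U (wvec ε) (wvec_norm ε)
          have h2 : (0:ℝ) ≤ Real.sqrt 2 := Real.sqrt_nonneg 2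
          exact mul_le_mul_of_nonneg_left (Finset.sum_le_sum fun ε _ => h1 ε) h2
      _ = c * (Real.sqrt 2 * ‖U‖) := by
          rw [Finset.sum_const]
          simp [hc, Fintype.card_fun, nsmul_eq_mul]
          ring
  exact le_of_mul_le_mul_left key hc0

/-- Littlewood's `ℓ¹(ℓ²)` bound for the columns. -/
lemma B_bound : ∑ j, Real.sqrt (∑ i, ‖U (e i) (e j)‖ ^ 2) ≤ Real.sqrt 2 * ‖U‖ := by
  set c : ℝ := (2:ℝ) ^ N with hc
  have hc0 : (0:ℝ) < c := by positivity
  have key : c * ∑ j, Real.sqrt (∑ i, ‖U (e i) (e j)‖ ^ 2) ≤ c * (Real.sqrt 2 * ‖U‖) := by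
    calc c * ∑ j, Real.sqrt (∑ i, ‖U (e i) (e j)‖ ^ 2)
        = ∑ j, c * Real.sqrt (∑ i, ‖U (e i) (e j)‖ ^ 2) := Finset.mul_sum _ _ _
      _ ≤ ∑ j, Real.sqrt 2 * ∑ ε : Fin N → Bool, ‖Sg (fun i => U (e i) (e j)) Finset.univ ε‖ :=
          Finset.sum_le_sum fun j _ => khintchine (fun i => U (e i) (e j))
      _ = Real.sqrt 2 * ∑ ε : Fin N → Bool, ∑ j, ‖U (wvec ε) (e j)‖ := by
          rw [← Finset.mul_sum]
          rw [Finset.sum_comm]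
          congr 1
          refine Finset.sum_congr rfl fun ε _ => Finset.sum_congr rfl fun j _ => ?_
          rw [Sg_col]
      _ ≤ Real.sqrt 2 * ∑ ε : Fin N → Bool, ‖U‖ := by
          have h1 : ∀ ε : Fin N → Bool, ∑ j, ‖U (wvec ε) (e j)‖ ≤ ‖U‖ :=
            fun ε => col_sum_le U (wvec ε) (wvec_norm ε)
          exact mul_le_mul_of_nonneg_left (Finset.sum_le_sum fun ε _ => h1 ε)
            (Real.sqrt_nonneg 2)
      _ = c * (Real.sqrt 2 * ‖U‖) := by
          rw [Finset.sum_const]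
          simp [hc, Fintype.card_fun, nsmul_eq_mul]
          ring
  exact le_of_mul_le_mul_left key hc0

end Bilinear


section Assembly

/-- two-vector Minkowski inequality for the Euclidean seminorm of sums. -/
lemma sqrt_sum_sq_add_le (a b : Fin N → ℝ) (ha : ∀ i, 0 ≤ a i) (hb : ∀ i, 0 ≤ b i) :
    Real.sqrt (∑ i, (a i + b i) ^ 2) ≤
      Real.sqrt (∑ i, (a i) ^ 2) + Real.sqrt (∑ i, (b i) ^ 2) := by
  set A : ℝ := ∑ i, (a i) ^ 2 with hA
  set B : ℝ := ∑ i, (b i) ^ 2 with hB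
  have hA0 : 0 ≤ A := Finset.sum_nonneg fun i _ => sq_nonneg _
  have hB0 : 0 ≤ B := Finset.sum_nonneg fun i _ => sq_nonneg _
  have hcs : (∑ i, a i * b i) ^ 2 ≤ A * B := Finset.sum_mul_sq_le_sq_mul_sq _ a b
  have hab0 : 0 ≤ ∑ i, a i * b i :=
    Finset.sum_nonneg fun i _ => mul_nonneg (ha i) (hb i)
  have hab : ∑ i, a i * b i ≤ Real.sqrt A * Real.sqrt B := by
    have h1 : ∑ i, a i * b i = Real.sqrt ((∑ i, a i * b i) ^ 2) :=
      (Real.sqrt_sq hab0).symm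
    rw [h1, ← Real.sqrt_mul hA0]
    exact Real.sqrt_le_sqrt hcs
  have hexp : ∑ i, (a i + b i) ^ 2 = A + 2 * ∑ i, a i * b i + B := by
    rw [hA, hB, Finset.mul_sum, ← Finset.sum_add_distrib, ← Finset.sum_add_distrib]
    exact Finset.sum_congr rfl fun i _ => by ring
  have hle : ∑ i, (a i + b i) ^ 2 ≤ (Real.sqrt A + Real.sqrt B) ^ 2 := by
    have h2 : (Real.sqrt A + Real.sqrt B) ^ 2
        = A + 2 * (Real.sqrt A * Real.sqrt B) + B := by
      linear_combination Real.sq_sqrt hA0 + Real.sq_sqrt hB0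
    rw [hexp, h2]
    linarith
  calc Real.sqrt (∑ i, (a i + b i) ^ 2) ≤ Real.sqrt ((Real.sqrt A + Real.sqrt B) ^ 2) :=
        Real.sqrt_le_sqrt hle
    _ = Real.sqrt A + Real.sqrt B :=
        Real.sqrt_sq (by positivity)

/-- Minkowski's inequality `ℓ²(ℓ¹) ≤ ℓ¹(ℓ²)` (swapped indices). -/
lemma minkowski_sum (s : Finset (Fin N)) (g : Fin N → Fin N → ℝ) (hg : ∀ i j, 0 ≤ g i j) :
    Real.sqrt (∑ i, (∑ j ∈ s, g i j) ^ 2) ≤ ∑ j ∈ s, Real.sqrt (∑ i, (g i j) ^ 2) := by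
  induction s using Finset.induction_on with
  | empty => simp
  | @insert j s hj IH =>
      have h1 : ∀ i : Fin N, ∑ j' ∈ insert j s, g i j' = g i j + ∑ j' ∈ s, g i j' :=
        fun i => Finset.sum_insert hj
      rw [Finset.sum_congr rfl (fun i (_ : i ∈ Finset.univ) => by rw [h1 i]),
        Finset.sum_insert hj]
      calc Real.sqrt (∑ i, (g i j + ∑ j' ∈ s, g i j') ^ 2)
          ≤ Real.sqrt (∑ i, (g i j) ^ 2) + Real.sqrt (∑ i, (∑ j' ∈ s, g i j') ^ 2) :=
            sqrt_sum_sq_add_le _ _ (fun i => hg i j)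
              (fun i => Finset.sum_nonneg fun j' _ => hg i j')
        _ ≤ Real.sqrt (∑ i, (g i j) ^ 2) + ∑ j' ∈ s, Real.sqrt (∑ i, (g i j') ^ 2) := by
            linarith [IH]

end Assembly


section Holder

/-- Hölder step 1: `Σ_j n^{4/3} ≤ (Σ_j n²)^{1/3} (Σ_j n)^{2/3}` for `n ≥ 0`. -/
lemma holder_step1 (n : Fin N → ℝ) (hn : ∀ j, 0 ≤ n j) :
    ∑ j, n j ^ ((4:ℝ)/3) ≤
      (∑ j, n j ^ 2) ^ ((1:ℝ)/3) * (∑ j, n j) ^ ((2:ℝ)/3) := by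
  have hpq : Real.HolderConjugate 3 (3/2) := ⟨by norm_num, by norm_num, by norm_num⟩
  have h := Real.inner_le_Lp_mul_Lq_of_nonneg Finset.univ hpq
    (f := fun j => n j ^ ((2:ℝ)/3)) (g := fun j => n j ^ ((2:ℝ)/3))
    (fun j _ => Real.rpow_nonneg (hn j) _) (fun j _ => Real.rpow_nonneg (hn j) _)
  have e1 : ∀ j, n j ^ ((2:ℝ)/3) * n j ^ ((2:ℝ)/3) = n j ^ ((4:ℝ)/3) := by
    intro j
    rw [← Real.rpow_add_of_nonneg (hn j) (by norm_num) (by norm_num)]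
    norm_num
  have e2 : ∀ j, (n j ^ ((2:ℝ)/3)) ^ (3:ℝ) = n j ^ 2 := by
    intro j
    rw [← Real.rpow_natCast (n j) 2, ← Real.rpow_mul (hn j)]
    norm_num
  have e3 : ∀ j, (n j ^ ((2:ℝ)/3)) ^ ((3:ℝ)/2) = n j := by
    intro j
    rw [← Real.rpow_mul (hn j)]
    norm_num
  rw [Finset.sum_congr rfl (fun j _ => e1 j),
      Finset.sum_congr rfl (fun j _ => e2 j),
      Finset.sum_congr rfl (fun j _ => e3 j)] at h
  convert h using 2 <;> norm_num

/-- Hölder step 2: `Σ_i X^{1/3} Y^{2/3} ≤ (Σ_i X^{1/2})^{2/3} (Σ_i Y²)^{1/3}`. -/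
lemma holder_step2 (X Y : Fin N → ℝ) (hX : ∀ i, 0 ≤ X i) (hY : ∀ i, 0 ≤ Y i) :
    ∑ i, X i ^ ((1:ℝ)/3) * Y i ^ ((2:ℝ)/3) ≤
      (∑ i, X i ^ ((1:ℝ)/2)) ^ ((2:ℝ)/3) * (∑ i, Y i ^ 2) ^ ((1:ℝ)/3) := by
  have hpq : Real.HolderConjugate (3/2) 3 := ⟨by norm_num, by norm_num, by norm_num⟩
  have h := Real.inner_le_Lp_mul_Lq_of_nonneg Finset.univ hpq
    (f := fun i => X i ^ ((1:ℝ)/3)) (g := fun i => Y i ^ ((2:ℝ)/3))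
    (fun i _ => Real.rpow_nonneg (hX i) _) (fun i _ => Real.rpow_nonneg (hY i) _)
  have e2 : ∀ i, (X i ^ ((1:ℝ)/3)) ^ ((3:ℝ)/2) = X i ^ ((1:ℝ)/2) := by
    intro i
    rw [← Real.rpow_mul (hX i)]
    norm_num
  have e3 : ∀ i, (Y i ^ ((2:ℝ)/3)) ^ (3:ℝ) = Y i ^ 2 := by
    intro i
    rw [← Real.rpow_natCast (Y i) 2, ← Real.rpow_mul (hY i)]
    norm_num
  rw [Finset.sum_congr rfl (fun i _ => e2 i),
      Finset.sum_congr rfl (fun i _ => e3 i)] at h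
  convert h using 2 <;> norm_num

end Holder

end
end Littlewood43

open Littlewood43 in
set_option maxHeartbeats 1000000 in
/-- **Littlewood's 4/3 inequality.** For every bilinear form
`U : ℓ_∞^N × ℓ_∞^N → 𝕂` (`𝕂 = ℝ` or `ℂ`),
`(Σ_{i,j=1}^N |U(e_i,e_j)|^{4/3})^{3/4} ≤ √2 ‖U‖`. -/
theorem littlewood_four_thirds {𝕂 : Type*} [RCLike 𝕂] (N : ℕ) (hN : 0 < N)
    (U : (Fin N → 𝕂) →L[𝕂] (Fin N → 𝕂) →L[𝕂] 𝕂) :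
    (∑ i : Fin N, ∑ j : Fin N,
        ‖U (Pi.single i 1) (Pi.single j 1)‖ ^ ((4 : ℝ) / 3)) ^ ((3 : ℝ) / 4) ≤
      Real.sqrt 2 * ‖U‖ := by
  set M : ℝ := Real.sqrt 2 * ‖U‖ with hM
  have hM0 : 0 ≤ M := mul_nonneg (Real.sqrt_nonneg 2) (ContinuousLinearMap.opNorm_nonneg U)
  set n : Fin N → Fin N → ℝ := fun i j => ‖U (e i) (e j)‖ with hn
  have hn0 : ∀ i j, 0 ≤ n i j := fun i j => norm_nonneg _
  have hP : (∑ i : Fin N, ∑ j : Fin N,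
      ‖U (Pi.single i 1) (Pi.single j 1)‖ ^ ((4 : ℝ) / 3))
      = ∑ i, ∑ j, n i j ^ ((4:ℝ)/3) := rfl
  rw [hP]
  set X : Fin N → ℝ := fun i => ∑ j, n i j ^ 2 with hX
  set Y : Fin N → ℝ := fun i => ∑ j, n i j with hY
  have hX0 : ∀ i, 0 ≤ X i := fun i => Finset.sum_nonneg fun j _ => sq_nonneg _
  have hY0 : ∀ i, 0 ≤ Y i := fun i => Finset.sum_nonneg fun j _ => hn0 i j
  -- step 1
  have h1 : ∑ i, ∑ j, n i j ^ ((4:ℝ)/3)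
      ≤ ∑ i, X i ^ ((1:ℝ)/3) * Y i ^ ((2:ℝ)/3) :=
    Finset.sum_le_sum fun i _ => holder_step1 (n i) (hn0 i)
  -- step 2
  have h2 : ∑ i, X i ^ ((1:ℝ)/3) * Y i ^ ((2:ℝ)/3)
      ≤ (∑ i, X i ^ ((1:ℝ)/2)) ^ ((2:ℝ)/3) * (∑ i, Y i ^ 2) ^ ((1:ℝ)/3) :=
    holder_step2 X Y hX0 hY0
  -- the ℓ¹(ℓ²) bounds
  have hA : ∑ i, X i ^ ((1:ℝ)/2) ≤ M := by
    have : ∀ i, X i ^ ((1:ℝ)/2) = Real.sqrt (X i) := fun i =>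
      (Real.sqrt_eq_rpow (X i)).symm
    rw [Finset.sum_congr rfl fun i _ => this i]
    exact A_bound U
  have hB : Real.sqrt (∑ i, Y i ^ 2) ≤ M := by
    calc Real.sqrt (∑ i, Y i ^ 2) ≤ ∑ j, Real.sqrt (∑ i, n i j ^ 2) :=
          minkowski_sum Finset.univ n hn0
      _ ≤ M := B_bound U
  have hC : ∑ i, Y i ^ 2 ≤ M ^ 2 := by
    have h3 : (0:ℝ) ≤ ∑ i, Y i ^ 2 := Finset.sum_nonneg fun i _ => sq_nonneg _
    calc ∑ i, Y i ^ 2 = Real.sqrt (∑ i, Y i ^ 2) ^ 2 := (Real.sq_sqrt h3).symm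
      _ ≤ M ^ 2 := by nlinarith [Real.sqrt_nonneg (∑ i, Y i ^ 2), hB]
  -- combine
  have hA0 : 0 ≤ ∑ i, X i ^ ((1:ℝ)/2) :=
    Finset.sum_nonneg fun i _ => Real.rpow_nonneg (hX0 i) _
  have hC0 : 0 ≤ ∑ i, Y i ^ 2 := Finset.sum_nonneg fun i _ => sq_nonneg _
  have h4 : (∑ i, X i ^ ((1:ℝ)/2)) ^ ((2:ℝ)/3) * (∑ i, Y i ^ 2) ^ ((1:ℝ)/3)
      ≤ M ^ ((2:ℝ)/3) * (M ^ 2) ^ ((1:ℝ)/3) := by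
    have t1 : (∑ i, X i ^ ((1:ℝ)/2)) ^ ((2:ℝ)/3) ≤ M ^ ((2:ℝ)/3) :=
      Real.rpow_le_rpow hA0 hA (by norm_num)
    have t2 : (∑ i, Y i ^ 2) ^ ((1:ℝ)/3) ≤ (M ^ 2) ^ ((1:ℝ)/3) :=
      Real.rpow_le_rpow hC0 hC (by norm_num)
    exact mul_le_mul t1 t2 (Real.rpow_nonneg hC0 _) (Real.rpow_nonneg hM0 _)
  have h5 : M ^ ((2:ℝ)/3) * (M ^ 2) ^ ((1:ℝ)/3) = M ^ ((4:ℝ)/3) := by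
    rw [← Real.rpow_natCast M 2, ← Real.rpow_mul hM0,
      ← Real.rpow_add_of_nonneg hM0 (by norm_num) (by norm_num)]
    norm_num
  have hPM : ∑ i, ∑ j, n i j ^ ((4:ℝ)/3) ≤ M ^ ((4:ℝ)/3) := by
    calc ∑ i, ∑ j, n i j ^ ((4:ℝ)/3) ≤ _ := h1
      _ ≤ _ := h2
      _ ≤ M ^ ((2:ℝ)/3) * (M ^ 2) ^ ((1:ℝ)/3) := h4
      _ = M ^ ((4:ℝ)/3) := h5
  have hP0 : 0 ≤ ∑ i, ∑ j, n i j ^ ((4:ℝ)/3) :=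
    Finset.sum_nonneg fun i _ => Finset.sum_nonneg fun j _ => Real.rpow_nonneg (hn0 i j) _
  calc (∑ i, ∑ j, n i j ^ ((4:ℝ)/3)) ^ ((3:ℝ)/4)
      ≤ (M ^ ((4:ℝ)/3)) ^ ((3:ℝ)/4) := Real.rpow_le_rpow hP0 hPM (by norm_num)
    _ = M := by
        rw [← Real.rpow_mul hM0]
        norm_num
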